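/- Core inequality of Theorem 5.1 (interpolation for cake cutting): Fix a profile (f_1,…,f_n) of piecewise constant value density functions and a piecewise constant misreport f_1'. Let A be an MNW allocation with respect to (f_1,…,f_n) and A' an MNW allocation with respect to (f_1', f_2,…,f_n). Then for every c ∈ [0,1], v_1(A_1') · (∏_{j=2}^n v_j(A_j'))^c ≤ 2^{1−c} · v_1(A_1) · (∏_{j=2}^n v_j(A_j))^c, where v_1 is measured with respect to the true density f_1. (This inequality shows that the variant of the PA mechanism with fractions y_i = ((∏_{j≠i} v_j(A_j))/(∏_{j≠i} v_j(A^i_j)))^c has incentive ratio at most 2^{1−c} and is e^{−c}-MNW.) -/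

import Mathlib

open MeasureTheory Set

noncomputable def cakeval (f : ℝ → ℝ) (S : Set ℝ) : ℝ := ∫ x in S, f x

def PiecewiseConstant (f : ℝ → ℝ) : Prop :=
  ∃ (m : ℕ) (a : Fin (m + 1) → ℝ) (c : Fin m → ℝ),
    a 0 = 0 ∧ a (Fin.last m) = 1 ∧ Monotone a ∧
    ∀ t : Fin m, ∀ x ∈ Set.Ico (a t.castSucc) (a t.succ), f x = c t

def ValidDensity (f : ℝ → ℝ) : Prop :=
  PiecewiseConstant f ∧ (∀ x, 0 ≤ f x) ∧ 0 < cakeval f (Set.Icc 0 1)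

def FinUnionIcc (S : Set ℝ) : Prop :=
  ∃ (k : ℕ) (a b : Fin k → ℝ), S = ⋃ j, Set.Icc (a j) (b j)

def IsAllocOn {n : ℕ} (C : Set ℝ) (A : Fin n → Set ℝ) : Prop :=
  (∀ i, A i ⊆ C) ∧ (∀ i, FinUnionIcc (A i)) ∧
    Pairwise fun i j => volume (A i ∩ A j) = 0

def IsAlloc {n : ℕ} (A : Fin n → Set ℝ) : Prop := IsAllocOn (Set.Icc 0 1) A

def CompleteAlloc {n : ℕ} (A : Fin n → Set ℝ) : Prop := (⋃ i, A i) = Set.Icc (0 : ℝ) 1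

noncomputable def nashProd {n : ℕ} (f : Fin n → ℝ → ℝ) (A : Fin n → Set ℝ) : ℝ :=
  ∏ i, cakeval (f i) (A i)

def IsMNWOn {n : ℕ} (C : Set ℝ) (f : Fin n → ℝ → ℝ) (A : Fin n → Set ℝ) : Prop :=
  IsAllocOn C A ∧ ∀ B : Fin n → Set ℝ, IsAllocOn C B → nashProd f B ≤ nashProd f A

def IsMNW {n : ℕ} (f : Fin n → ℝ → ℝ) (A : Fin n → Set ℝ) : Prop :=
  IsMNWOn (Set.Icc 0 1) f A

def IsCompleteMNW {n : ℕ} (f : Fin n → ℝ → ℝ) (A : Fin n → Set ℝ) : Prop :=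
  IsAlloc A ∧ CompleteAlloc A ∧
    ∀ B : Fin n → Set ℝ, IsAlloc B → CompleteAlloc B → nashProd f B ≤ nashProd f A

lemma FinUnionIcc.measurableSet {S : Set ℝ} (h : FinUnionIcc S) : MeasurableSet S := by
  obtain ⟨k, a, b, rfl⟩ := h
  exact MeasurableSet.iUnion fun j => measurableSet_Icc

lemma vol_Icc_inter_Icc {a b c d : ℝ} (h : b ≤ c) : volume (Icc a b ∩ Icc c d) = 0 := by
  have hsub : Icc a b ∩ Icc c d ⊆ Icc c b := fun x hx => ⟨hx.2.1, hx.1.2⟩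
  refine le_antisymm ?_ (zero_le)
  calc volume (Icc a b ∩ Icc c d) ≤ volume (Icc c b) := measure_mono hsub
    _ = ENNReal.ofReal (b - c) := Real.volume_Icc
    _ = 0 := by rw [ENNReal.ofReal_eq_zero]; linarith

lemma cakeval_nonneg {f : ℝ → ℝ} (hf : ∀ x, 0 ≤ f x) {S : Set ℝ} (hS : MeasurableSet S) :
    0 ≤ cakeval f S :=
  setIntegral_nonneg hS fun x _ => hf x

-- derivative lemma

lemma sum_div_le_card {N : ℕ} (a b : Fin N → ℝ) (ha : ∀ i, 0 < a i)
    (H : ∀ θ ∈ Icc (0:ℝ) 1, (∏ i, ((1-θ) * a i + θ * b i)) ≤ ∏ i, a i) :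
    ∑ i, b i / a i ≤ N := by
  set F : ℝ → ℝ := fun θ => ∏ i, (a i + θ * (b i - a i)) with hF
  have hFeq : ∀ θ, F θ = ∏ i, ((1-θ) * a i + θ * b i) := by
    intro θ; apply Finset.prod_congr rfl; intro i _; ring
  have hF0 : F 0 = ∏ i, a i := by simp [hF]
  have hD : HasDerivAt F (∑ i, (∏ j ∈ Finset.univ.erase i, (a j + 0 * (b j - a j))) • (b i - a i)) 0 := by
    apply HasDerivAt.fun_finsetProd
    intro i _
    simpa using (hasDerivAt_mul_const (b i - a i)).const_add (a i)
  have hD' : HasDerivAt F (∑ i, (∏ j ∈ Finset.univ.erase i, a j) * (b i - a i)) 0 := by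
    convert hD using 2 with i
    simp [smul_eq_mul]
  -- slope argument
  have hslope := hasDerivAt_iff_tendsto_slope.1 hD'
  have hle : (∑ i, (∏ j ∈ Finset.univ.erase i, a j) * (b i - a i)) ≤ 0 := by
    have hmono : nhdsWithin (0:ℝ) (Set.Ioi 0) ≤ nhdsWithin 0 {0}ᶜ :=
      nhdsWithin_mono 0 (fun x hx => ne_of_gt hx)
    refine le_of_tendsto (hslope.mono_left hmono) ?_
    · filter_upwards [Ioo_mem_nhdsGT_of_mem (Set.left_mem_Ico.2 one_pos)] with θ hθ
      have hθ0 : 0 < θ := hθ.1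
      have := H θ ⟨le_of_lt hθ0, le_of_lt hθ.2⟩
      rw [← hFeq] at this
      have hFθ : F θ - F 0 ≤ 0 := by rw [hF0]; linarith
      have : slope F 0 θ = (F θ - F 0) / θ := by
        rw [slope_def_field]; ring_nf
      rw [this]
      exact div_nonpos_of_nonpos_of_nonneg hFθ (le_of_lt hθ0)
  -- conclude
  have hprodpos : (0:ℝ) < ∏ j, a j := Finset.prod_pos fun j _ => ha j
  have hkey : ∀ i, (∏ j ∈ Finset.univ.erase i, a j) * (b i - a i)
      = (∏ j, a j) * (b i / a i - 1) := by
    intro i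
    have : (∏ j, a j) = a i * ∏ j ∈ Finset.univ.erase i, a j :=
      (Finset.mul_prod_erase _ _ (Finset.mem_univ i)).symm
    rw [this, mul_comm (a i), mul_assoc]
    congr 1
    have hai : a i ≠ 0 := (ha i).ne'
    rw [mul_sub, mul_div_cancel₀ _ hai, mul_one]
  rw [Finset.sum_congr rfl (fun i _ => hkey i), ← Finset.mul_sum] at hle
  have hsum : ∑ i, (b i / a i - 1) ≤ 0 := by
    by_contra h
    push_neg at h
    nlinarith
  rw [Finset.sum_sub_distrib] at hsum
  simp only [Finset.sum_const, Finset.card_univ, Fintype.card_fin, nsmul_eq_mul, mul_one] at hsum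
  linarith

lemma mem_cell {K : ℕ} (g : Fin (K+1) → ℝ) (hmono : Monotone g) (hg0 : g 0 = 0)
    (hgl : g (Fin.last K) = 1) {x : ℝ} (hx : x ∈ Ico (0:ℝ) 1) :
    ∃ k : Fin K, x ∈ Ico (g k.castSucc) (g k.succ) := by
  classical
  set T : Finset (Fin (K+1)) := Finset.univ.filter (fun s => g s ≤ x) with hT
  have h0T : (0 : Fin (K+1)) ∈ T := by simp [hT, hg0, hx.1]
  have hTne : T.Nonempty := ⟨0, h0T⟩
  set t' := T.max' hTne with ht'
  have ht'mem : t' ∈ T := T.max'_mem hTne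
  have ht'le : g t' ≤ x := by simpa [hT] using ht'mem
  have ht'ne : t' ≠ Fin.last K := by
    intro h
    rw [h, hgl] at ht'le
    exact absurd hx.2 (not_lt.2 ht'le)
  have ht'lt : (t' : ℕ) < K := by
    rcases lt_or_eq_of_le (Nat.lt_succ_iff.1 t'.isLt) with h | h
    · exact h
    · exact absurd (Fin.ext h : t' = Fin.last K) ht'ne
  refine ⟨⟨(t' : ℕ), ht'lt⟩, ?_, ?_⟩
  · simpa [Fin.castSucc] using ht'le
  · by_contra h
    push_neg at h
    have hmem : (⟨(t' : ℕ), ht'lt⟩ : Fin K).succ ∈ T := by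
      simp only [hT, Finset.mem_filter, Finset.mem_univ, true_and]
      exact h
    have := T.le_max' _ hmem
    rw [← ht'] at this
    have : ((⟨(t' : ℕ), ht'lt⟩ : Fin K).succ : ℕ) ≤ (t' : ℕ) := this
    simp at this

lemma cells_disjoint {K : ℕ} {g : Fin (K+1) → ℝ} (hmono : Monotone g) {k k' : Fin K}
    (hne : k' ≠ k) {x : ℝ} (hx : x ∈ Ico (g k.castSucc) (g k.succ)) :
    x ∉ Ico (g k'.castSucc) (g k'.succ) := by
  intro hx'
  rcases lt_or_gt_of_ne hne with hlt | hlt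
  · have hv : (k' : ℕ) < (k : ℕ) := hlt
    have : g k'.succ ≤ g k.castSucc := hmono (by
      rw [Fin.le_def]
      simp only [Fin.val_succ, Fin.coe_castSucc]
      omega)
    exact absurd (lt_of_lt_of_le hx'.2 (le_trans this hx.1)) (lt_irrefl x)
  · have hv : (k : ℕ) < (k' : ℕ) := hlt
    have : g k.succ ≤ g k'.castSucc := hmono (by
      rw [Fin.le_def]
      simp only [Fin.val_succ, Fin.coe_castSucc]
      omega)
    exact absurd (lt_of_lt_of_le hx.2 (le_trans this hx'.1)) (lt_irrefl x)

lemma cakeval_eq_sum {K : ℕ} (g : Fin (K+1) → ℝ) (hmono : Monotone g) (hg0 : g 0 = 0)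
    (hgl : g (Fin.last K) = 1) (h : ℝ → ℝ)
    (hconst : ∀ k : Fin K, ∀ x ∈ Ico (g k.castSucc) (g k.succ), h x = h (g k.castSucc))
    {S : Set ℝ} (hS : MeasurableSet S) (hS1 : S ⊆ Icc 0 1) :
    cakeval h S
      = ∑ k : Fin K, h (g k.castSucc) * (volume (S ∩ Ico (g k.castSucc) (g k.succ))).toReal := by
  classical
  set s : ℝ → ℝ :=
    fun x => ∑ k : Fin K, (Ico (g k.castSucc) (g k.succ)).indicator (fun _ => h (g k.castSucc)) x
    with hs
  have heqon : ∀ x ∈ S \ {1}, h x = s x := by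
    intro x hx
    have hx01 : x ∈ Ico (0:ℝ) 1 := by
      have := hS1 hx.1
      exact ⟨this.1, lt_of_le_of_ne this.2 (by simpa using hx.2)⟩
    obtain ⟨k, hk⟩ := mem_cell g hmono hg0 hgl hx01
    have : s x = h (g k.castSucc) := by
      have hsx : s x = ∑ k : Fin K,
          (Ico (g k.castSucc) (g k.succ)).indicator (fun _ => h (g k.castSucc)) x := rfl
      rw [hsx, Finset.sum_eq_single k]
      · simp [Set.indicator_of_mem hk]
      · intro k' _ hne
        exact Set.indicator_of_notMem (cells_disjoint hmono hne hk) _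
      · intro habs
        exact absurd (Finset.mem_univ k) habs
    rw [this]
    exact hconst k x hk
  have hae : h =ᵐ[volume.restrict S] s := by
    have hsub : {x | h x ≠ s x} ⊆ {1} ∪ Sᶜ := by
      intro x hx
      by_contra hmem
      simp only [Set.mem_union, Set.mem_singleton_iff, Set.mem_compl_iff, not_or, not_not] at hmem
      exact hx (heqon x ⟨hmem.2, by simpa using hmem.1⟩)
    refine measure_mono_null hsub ?_
    apply measure_union_null
    · rw [Measure.restrict_apply (measurableSet_singleton 1)]
      exact measure_mono_null Set.inter_subset_left Real.volume_singleton
    · rw [Measure.restrict_apply hS.compl]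
      simp
  have hSfin : volume S < ⊤ := by
    calc volume S ≤ volume (Icc (0:ℝ) 1) := measure_mono hS1
      _ < ⊤ := by rw [Real.volume_Icc]; exact ENNReal.ofReal_lt_top
  have hint : ∀ k : Fin K,
      Integrable ((Ico (g k.castSucc) (g k.succ)).indicator (fun _ => h (g k.castSucc)))
        (volume.restrict S) := by
    intro k
    refine Integrable.indicator ?_ measurableSet_Ico
    exact integrableOn_const hSfin.ne (by simp)
  calc cakeval h S = ∫ x in S, s x := integral_congr_ae hae
    _ = ∑ k : Fin K, ∫ x in S,
          (Ico (g k.castSucc) (g k.succ)).indicator (fun _ => h (g k.castSucc)) x :=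
        integral_finset_sum _ fun k _ => hint k
    _ = _ := by
        refine Finset.sum_congr rfl fun k _ => ?_
        rw [MeasureTheory.setIntegral_indicator measurableSet_Ico, setIntegral_const, smul_eq_mul,
          mul_comm, measureReal_def]

lemma exists_alloc {K N : ℕ} (g : Fin (K+1) → ℝ) (hmono : Monotone g)
    (hg0 : g 0 = 0) (hgl : g (Fin.last K) = 1)
    (γ : Fin K → Fin N → ℝ) (hγ : ∀ k i, 0 ≤ γ k i)
    (hrow : ∀ k, (∑ i, γ k i) ≤ g k.succ - g k.castSucc) :
    ∃ C : Fin N → Set ℝ, IsAlloc C ∧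
      ∀ i k, volume (C i ∩ Ico (g k.castSucc) (g k.succ)) = ENNReal.ofReal (γ k i) := by
  classical
  set p : Fin K → Fin N → ℝ := fun k i => ∑ j ∈ Finset.Iio i, γ k j with hp
  set L : Fin K → Fin N → ℝ := fun k i => g k.castSucc + p k i with hL
  set C : Fin N → Set ℝ := fun i => ⋃ k : Fin K, Icc (L k i) (L k i + γ k i) with hC
  have hpnonneg : ∀ k i, 0 ≤ p k i := fun k i => Finset.sum_nonneg fun j _ => hγ k j
  have hptot : ∀ k i, p k i + γ k i ≤ ∑ j, γ k j := by
    intro k i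
    have : p k i + γ k i = ∑ j ∈ insert i (Finset.Iio i), γ k j := by
      rw [Finset.sum_insert (by simp)]
      ring
    rw [this]
    exact Finset.sum_le_sum_of_subset_of_nonneg (Finset.subset_univ _)
      (fun j _ _ => hγ k j)
  have hub : ∀ k i, L k i + γ k i ≤ g k.succ := by
    intro k i
    have := hptot k i
    have := hrow k
    simp only [hL]
    linarith
  have hlb : ∀ k i, g k.castSucc ≤ L k i := by
    intro k i
    simp only [hL]
    linarith [hpnonneg k i]
  have hg00 : ∀ k : Fin K, (0:ℝ) ≤ g k.castSucc := by
    intro k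
    rw [← hg0]
    exact hmono (Fin.zero_le _)
  have hg11 : ∀ k : Fin K, g k.succ ≤ 1 := by
    intro k
    rw [← hgl]
    exact hmono (Fin.le_last _)
  -- pieces in different cells or different agents are a.e. disjoint
  have hord : ∀ (k : Fin K) (i i' : Fin N), i < i' → L k i + γ k i ≤ L k i' := by
    intro k i i' hi
    have hsum : p k i + γ k i = ∑ j ∈ insert i (Finset.Iio i), γ k j := by
      rw [Finset.sum_insert (by simp)]; ring
    have hsub : insert i (Finset.Iio i) ⊆ Finset.Iio i' := by
      intro j hj
      simp only [Finset.mem_insert, Finset.mem_Iio] at hj ⊢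
      rcases hj with rfl | hj
      · exact hi
      · exact lt_trans hj hi
    have : p k i + γ k i ≤ p k i' := by
      rw [hsum, hp]
      exact Finset.sum_le_sum_of_subset_of_nonneg hsub (fun j _ _ => hγ k j)
    simp only [hL]
    linarith
  have hcellord : ∀ (k k' : Fin K) (i i' : Fin N), k < k' → L k i + γ k i ≤ L k' i' := by
    intro k k' i i' hk
    have hv : (k : ℕ) < (k' : ℕ) := hk
    have hgg : g k.succ ≤ g k'.castSucc := hmono (by
      rw [Fin.le_def]
      simp only [Fin.val_succ, Fin.coe_castSucc]
      omega)
    calc L k i + γ k i ≤ g k.succ := hub k i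
      _ ≤ g k'.castSucc := hgg
      _ ≤ L k' i' := hlb k' i'
  have hsep : ∀ (k k' : Fin K) (i i' : Fin N), (k ≠ k' ∨ (k = k' ∧ i ≠ i')) →
      volume (Icc (L k i) (L k i + γ k i) ∩ Icc (L k' i') (L k' i' + γ k' i')) = 0 := by
    intro k k' i i' hne
    rcases hne with hkk | ⟨rfl, hii⟩
    · rcases lt_or_gt_of_ne hkk with hk | hk
      · exact vol_Icc_inter_Icc (hcellord k k' i i' hk)
      · rw [Set.inter_comm]
        exact vol_Icc_inter_Icc (hcellord k' k i' i hk)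
    · rcases lt_or_gt_of_ne hii with hi | hi
      · exact vol_Icc_inter_Icc (hord k i i' hi)
      · rw [Set.inter_comm]
        exact vol_Icc_inter_Icc (hord k i' i hi)
  have hpieceIcc : ∀ (k : Fin K) (i : Fin N),
      Icc (L k i) (L k i + γ k i) ⊆ Icc (g k.castSucc) (g k.succ) :=
    fun k i => Icc_subset_Icc (hlb k i) (hub k i)
  refine ⟨C, ⟨?_, ?_, ?_⟩, ?_⟩
  · intro i
    refine Set.iUnion_subset fun k => ?_
    exact (hpieceIcc k i).trans (Icc_subset_Icc (hg00 k) (hg11 k))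
  · intro i
    exact ⟨K, fun k => L k i, fun k => L k i + γ k i, rfl⟩
  · intro i j hij
    have hsub : C i ∩ C j ⊆
        ⋃ k : Fin K, ⋃ k' : Fin K,
          (Icc (L k i) (L k i + γ k i) ∩ Icc (L k' j) (L k' j + γ k' j)) := by
      rintro x ⟨hx1, hx2⟩
      rw [hC, Set.mem_iUnion] at hx1 hx2
      obtain ⟨k, hk⟩ := hx1
      obtain ⟨k', hk'⟩ := hx2
      exact Set.mem_iUnion.2 ⟨k, Set.mem_iUnion.2 ⟨k', hk, hk'⟩⟩
    refine measure_mono_null hsub ?_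
    refine measure_iUnion_null fun k => measure_iUnion_null fun k' => ?_
    by_cases hkk : k = k'
    · exact hsep k k' i j (Or.inr ⟨hkk, hij⟩)
    · exact hsep k k' i j (Or.inl hkk)
  · intro i k
    set E : Fin K → Set ℝ :=
      fun k' => Icc (L k' i) (L k' i + γ k' i) ∩ Ico (g k.castSucc) (g k.succ) with hE
    have hCE : C i ∩ Ico (g k.castSucc) (g k.succ) = ⋃ k', E k' := by
      rw [hC, hE, Set.iUnion_inter]
    have hnull : ∀ k', k' ≠ k → volume (E k') = 0 := by
      intro k' hkk
      have hsubE : E k' ⊆ Icc (L k' i) (L k' i + γ k' i) ∩ Icc (g k.castSucc) (g k.succ) :=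
        Set.inter_subset_inter_right _ Ico_subset_Icc_self
      refine measure_mono_null hsubE ?_
      rcases lt_or_gt_of_ne hkk with hk' | hk'
      · have hv : (k' : ℕ) < (k : ℕ) := hk'
        refine vol_Icc_inter_Icc ?_
        calc L k' i + γ k' i ≤ g k'.succ := hub k' i
          _ ≤ g k.castSucc := hmono (by
              rw [Fin.le_def]
              simp only [Fin.val_succ, Fin.coe_castSucc]
              omega)
      · have hv : (k : ℕ) < (k' : ℕ) := hk'
        rw [Set.inter_comm]
        refine vol_Icc_inter_Icc ?_
        calc g k.succ ≤ g k'.castSucc := hmono (by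
              rw [Fin.le_def]
              simp only [Fin.val_succ, Fin.coe_castSucc]
              omega)
          _ ≤ L k' i := hlb k' i
    rw [hCE]
    refine le_antisymm ?_ ?_
    · calc volume (⋃ k', E k') ≤ ∑ k', volume (E k') := measure_iUnion_fintype_le _ _
        _ = volume (E k) := by
            rw [Finset.sum_eq_single k]
            · intro k' _ hkk
              exact hnull k' hkk
            · intro h
              exact absurd (Finset.mem_univ k) h
        _ ≤ volume (Icc (L k i) (L k i + γ k i)) := measure_mono Set.inter_subset_left
        _ = ENNReal.ofReal (γ k i) := by rw [Real.volume_Icc]; ring_nf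
    · have hsub2 : Ico (L k i) (L k i + γ k i) ⊆ E k := by
        intro x hx
        refine ⟨⟨hx.1, le_of_lt hx.2⟩, le_trans (hlb k i) hx.1, lt_of_lt_of_le hx.2 (hub k i)⟩
      calc ENNReal.ofReal (γ k i) = volume (Ico (L k i) (L k i + γ k i)) := by
            rw [Real.volume_Ico]; ring_nf
        _ ≤ volume (E k) := measure_mono hsub2
        _ ≤ volume (⋃ k', E k') := measure_mono (Set.subset_iUnion E k)

lemma exists_grid {N : ℕ} (F : Fin N → ℝ → ℝ) (hF : ∀ i, PiecewiseConstant (F i)) :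
    ∃ (K : ℕ) (g : Fin (K+1) → ℝ), StrictMono g ∧ g 0 = 0 ∧ g (Fin.last K) = 1 ∧
      ∀ i (k : Fin K), ∀ x ∈ Ico (g k.castSucc) (g k.succ), F i x = F i (g k.castSucc) := by
  classical
  choose m a c h0 h1 hmono hcell using hF
  set G : Finset ℝ :=
    (Finset.univ.biUnion fun i : Fin N => Finset.image (a i) Finset.univ) ∪ {0, 1} with hG
  have hG0 : (0:ℝ) ∈ G := by simp [hG]
  have hG1 : (1:ℝ) ∈ G := by simp [hG]
  have hGsub : ∀ x ∈ G, x ∈ Icc (0:ℝ) 1 := by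
    intro x hx
    rw [hG, Finset.mem_union] at hx
    rcases hx with hx | hx
    · rw [Finset.mem_biUnion] at hx
      obtain ⟨i, _, hx⟩ := hx
      rw [Finset.mem_image] at hx
      obtain ⟨t, _, rfl⟩ := hx
      constructor
      · rw [← h0 i]; exact hmono i (Fin.zero_le _)
      · rw [← h1 i]; exact hmono i (Fin.le_last _)
    · rcases Finset.mem_insert.1 hx with rfl | hx
      · exact ⟨le_refl 0, zero_le_one⟩
      · rw [Finset.mem_singleton] at hx
        subst hx
        exact ⟨zero_le_one, le_refl 1⟩
  have hcardpos : 0 < G.card := Finset.card_pos.2 ⟨0, hG0⟩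
  set K := G.card - 1 with hK
  have hcard : G.card = K + 1 := by omega
  set e := G.orderIsoOfFin hcard with he
  set g : Fin (K+1) → ℝ := fun j => (e j : ℝ) with hg
  have hgmono : StrictMono g := fun j j' hj => Subtype.coe_lt_coe.2 (e.strictMono hj)
  have hgmem : ∀ j, g j ∈ G := fun j => (e j).2
  have hsurj : ∀ x ∈ G, ∃ j, g j = x := by
    intro x hx
    obtain ⟨j, hj⟩ := e.surjective ⟨x, hx⟩
    exact ⟨j, congrArg Subtype.val hj⟩
  have hg0 : g 0 = 0 := by
    obtain ⟨j, hj⟩ := hsurj 0 hG0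
    refine le_antisymm ?_ ?_
    · rw [← hj]; exact (hgmono.monotone (Fin.zero_le j))
    · exact (hGsub _ (hgmem 0)).1
  have hgl : g (Fin.last K) = 1 := by
    obtain ⟨j, hj⟩ := hsurj 1 hG1
    refine le_antisymm ?_ ?_
    · exact (hGsub _ (hgmem _)).2
    · rw [← hj]; exact hgmono.monotone (Fin.le_last j)
  have hconsec : ∀ x ∈ G, ∀ k : Fin K, ¬(g k.castSucc < x ∧ x < g k.succ) := by
    intro x hx k ⟨hlt1, hlt2⟩
    obtain ⟨j, rfl⟩ := hsurj x hx
    have hj1 : k.castSucc < j := hgmono.lt_iff_lt.1 hlt1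
    have hj2 : j < k.succ := hgmono.lt_iff_lt.1 hlt2
    have : (k : ℕ) < (j : ℕ) := hj1
    have : (j : ℕ) < (k : ℕ) + 1 := hj2
    omega
  refine ⟨K, g, hgmono, hg0, hgl, ?_⟩
  intro i k x hx
  have hcell0 : g k.castSucc ∈ Ico (0:ℝ) 1 := by
    refine ⟨(hGsub _ (hgmem _)).1, ?_⟩
    calc g k.castSucc < g k.succ := hgmono ((Fin.castSucc_lt_succ (i := k)))
      _ ≤ 1 := by rw [← hgl]; exact hgmono.monotone (Fin.le_last _)
  obtain ⟨t, ht⟩ := mem_cell (a i) (hmono i) (h0 i) (h1 i) hcell0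
  have hat : a i t.succ ∈ G := by
    rw [hG, Finset.mem_union]
    left
    rw [Finset.mem_biUnion]
    exact ⟨i, Finset.mem_univ i, Finset.mem_image.2 ⟨t.succ, Finset.mem_univ _, rfl⟩⟩
  have hxt : x ∈ Ico (a i t.castSucc) (a i t.succ) := by
    refine ⟨le_trans ht.1 hx.1, ?_⟩
    by_contra hge
    push_neg at hge
    exact hconsec _ hat k ⟨ht.2, lt_of_le_of_lt hge hx.2⟩
  rw [hcell i t x hxt, hcell i t _ ht]

lemma alloc_rowsum {N K : ℕ} {A : Fin N → Set ℝ} (hA : IsAlloc A)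
    {g : Fin (K+1) → ℝ} (hmono : Monotone g) (k : Fin K) :
    ∑ i, (volume (A i ∩ Ico (g k.castSucc) (g k.succ))).toReal
      ≤ g k.succ - g k.castSucc := by
  have hmeas : ∀ i, MeasurableSet (A i ∩ Ico (g k.castSucc) (g k.succ)) :=
    fun i => ((hA.2.1 i).measurableSet).inter measurableSet_Ico
  have hdisj : Pairwise (Function.onFun (AEDisjoint volume) fun i => A i ∩ Ico (g k.castSucc) (g k.succ)) := by
    intro i j hij
    refine measure_mono_null ?_ (hA.2.2 hij)
    exact Set.inter_subset_inter Set.inter_subset_left Set.inter_subset_left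
  have hsum : ∑' i, volume (A i ∩ Ico (g k.castSucc) (g k.succ))
      = volume (⋃ i, A i ∩ Ico (g k.castSucc) (g k.succ)) :=
    (measure_iUnion₀ hdisj fun i => (hmeas i).nullMeasurableSet).symm
  have hle : ∑ i, volume (A i ∩ Ico (g k.castSucc) (g k.succ))
      ≤ ENNReal.ofReal (g k.succ - g k.castSucc) := by
    rw [← tsum_fintype (L := SummationFilter.unconditional _), hsum, ← Real.volume_Ico]
    exact measure_mono (Set.iUnion_subset fun i => Set.inter_subset_right)
  have hfin : ∀ i, volume (A i ∩ Ico (g k.castSucc) (g k.succ)) ≠ ⊤ := by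
    intro i
    refine ne_of_lt (lt_of_le_of_lt (measure_mono Set.inter_subset_right) ?_)
    rw [Real.volume_Ico]
    exact ENNReal.ofReal_lt_top
  have := ENNReal.toReal_mono (by simp) hle
  rw [ENNReal.toReal_sum (fun i _ => hfin i)] at this
  calc ∑ i, (volume (A i ∩ Ico (g k.castSucc) (g k.succ))).toReal
      ≤ (ENNReal.ofReal (g k.succ - g k.castSucc)).toReal := this
    _ ≤ max (g k.succ - g k.castSucc) 0 := le_of_eq ENNReal.toReal_ofReal'
    _ ≤ _ := by
        have : g k.castSucc ≤ g k.succ := hmono (le_of_lt ((Fin.castSucc_lt_succ (i := k))))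
        rw [max_eq_left (by linarith)]

lemma interp_alloc {N K : ℕ} (g : Fin (K+1) → ℝ) (hsm : StrictMono g)
    (hg0 : g 0 = 0) (hgl : g (Fin.last K) = 1)
    (A B : Fin N → Set ℝ) (hA : IsAlloc A) (hB : IsAlloc B)
    (θ : ℝ) (hθ : θ ∈ Icc (0:ℝ) 1) :
    ∃ C : Fin N → Set ℝ, IsAlloc C ∧
      ∀ h : ℝ → ℝ, (∀ x, 0 ≤ h x) →
        (∀ k : Fin K, ∀ x ∈ Ico (g k.castSucc) (g k.succ), h x = h (g k.castSucc)) →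
        ∀ i, cakeval h (C i) = (1-θ) * cakeval h (A i) + θ * cakeval h (B i) := by
  have hmono := hsm.monotone
  set γ : Fin K → Fin N → ℝ := fun k i =>
    (1-θ) * (volume (A i ∩ Ico (g k.castSucc) (g k.succ))).toReal
      + θ * (volume (B i ∩ Ico (g k.castSucc) (g k.succ))).toReal with hγdef
  have hγnn : ∀ k i, 0 ≤ γ k i := by
    intro k i
    have h1 : (0:ℝ) ≤ 1 - θ := by linarith [hθ.2]
    have h2 := hθ.1
    have h3 : (0:ℝ) ≤ (volume (A i ∩ Ico (g k.castSucc) (g k.succ))).toReal := ENNReal.toReal_nonneg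
    have h4 : (0:ℝ) ≤ (volume (B i ∩ Ico (g k.castSucc) (g k.succ))).toReal := ENNReal.toReal_nonneg
    simp only [hγdef]
    nlinarith
  have hrow : ∀ k, (∑ i, γ k i) ≤ g k.succ - g k.castSucc := by
    intro k
    rw [hγdef]
    rw [Finset.sum_add_distrib, ← Finset.mul_sum, ← Finset.mul_sum]
    have hrA := alloc_rowsum hA hmono k
    have hrB := alloc_rowsum hB hmono k
    have h1 : (0:ℝ) ≤ 1 - θ := by linarith [hθ.2]
    nlinarith [hθ.1, hθ.2]
  obtain ⟨C, hCalloc, hCvol⟩ := exists_alloc g hmono hg0 hgl γ hγnn hrow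
  refine ⟨C, hCalloc, ?_⟩
  intro h hnn hconst i
  have hsubA : A i ⊆ Icc 0 1 := hA.1 i
  have hsubB : B i ⊆ Icc 0 1 := hB.1 i
  have hsubC : C i ⊆ Icc 0 1 := hCalloc.1 i
  rw [cakeval_eq_sum g hmono hg0 hgl h hconst (hCalloc.2.1 i).measurableSet hsubC,
    cakeval_eq_sum g hmono hg0 hgl h hconst (hA.2.1 i).measurableSet hsubA,
    cakeval_eq_sum g hmono hg0 hgl h hconst (hB.2.1 i).measurableSet hsubB,
    Finset.mul_sum, Finset.mul_sum, ← Finset.sum_add_distrib]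
  refine Finset.sum_congr rfl fun k _ => ?_
  rw [hCvol i k, ENNReal.toReal_ofReal (hγnn k i), hγdef]
  ring

lemma pos_alloc {N K : ℕ} (hN : 0 < N) (g : Fin (K+1) → ℝ) (hsm : StrictMono g)
    (hg0 : g 0 = 0) (hgl : g (Fin.last K) = 1)
    (F : Fin N → ℝ → ℝ) (hnn : ∀ i x, 0 ≤ F i x)
    (hconst : ∀ i (k : Fin K), ∀ x ∈ Ico (g k.castSucc) (g k.succ), F i x = F i (g k.castSucc))
    (hpos : ∀ i, 0 < cakeval (F i) (Icc 0 1)) :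
    ∃ D : Fin N → Set ℝ, IsAlloc D ∧ ∀ i, 0 < cakeval (F i) (D i) := by
  classical
  have hmono := hsm.monotone
  have hlen : ∀ k : Fin K, 0 < g k.succ - g k.castSucc := by
    intro k
    have := hsm ((Fin.castSucc_lt_succ (i := k)))
    linarith
  have hvol : ∀ k : Fin K, volume (Icc (0:ℝ) 1 ∩ Ico (g k.castSucc) (g k.succ))
      = ENNReal.ofReal (g k.succ - g k.castSucc) := by
    intro k
    rw [Set.inter_eq_self_of_subset_right, Real.volume_Ico]
    intro x hx
    constructor
    · calc (0:ℝ) = g 0 := hg0.symm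
        _ ≤ g k.castSucc := hmono (Fin.zero_le _)
        _ ≤ x := hx.1
    · calc x ≤ g k.succ := le_of_lt hx.2
        _ ≤ g (Fin.last K) := hmono (Fin.le_last _)
        _ = 1 := hgl
  have hterm : ∀ i, ∃ k : Fin K, 0 < F i (g k.castSucc) := by
    intro i
    have := hpos i
    rw [cakeval_eq_sum g hmono hg0 hgl (F i) (hconst i) measurableSet_Icc (le_refl _)] at this
    by_contra hcon
    push_neg at hcon
    have : ∑ k : Fin K, F i (g k.castSucc)
        * (volume (Icc (0:ℝ) 1 ∩ Ico (g k.castSucc) (g k.succ))).toReal ≤ 0 := by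
      refine Finset.sum_nonpos fun k _ => ?_
      have h1 : F i (g k.castSucc) = 0 := le_antisymm (hcon k) (hnn i _)
      rw [h1, zero_mul]
    linarith
  choose ki hki using hterm
  set γ : Fin K → Fin N → ℝ :=
    fun k i => if k = ki i then (g k.succ - g k.castSucc) / N else 0 with hγdef
  have hNR : (0:ℝ) < N := Nat.cast_pos.2 hN
  have hγnn : ∀ k i, 0 ≤ γ k i := by
    intro k i
    simp only [hγdef]
    split
    · exact div_nonneg (le_of_lt (hlen k)) hNR.le
    · exact le_refl 0
  have hrow : ∀ k, (∑ i, γ k i) ≤ g k.succ - g k.castSucc := by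
    intro k
    calc ∑ i, γ k i ≤ ∑ _i : Fin N, (g k.succ - g k.castSucc) / N := by
          refine Finset.sum_le_sum fun i _ => ?_
          simp only [hγdef]
          split
          · exact le_refl _
          · exact div_nonneg (le_of_lt (hlen k)) hNR.le
      _ = N * ((g k.succ - g k.castSucc) / N) := by
          rw [Finset.sum_const, Finset.card_univ, Fintype.card_fin, nsmul_eq_mul]
      _ = g k.succ - g k.castSucc := by field_simp
  obtain ⟨D, hDalloc, hDvol⟩ := exists_alloc g hmono hg0 hgl γ hγnn hrow
  refine ⟨D, hDalloc, fun i => ?_⟩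
  rw [cakeval_eq_sum g hmono hg0 hgl (F i) (hconst i) (hDalloc.2.1 i).measurableSet
    (hDalloc.1 i)]
  have hterm_pos : 0 < F i (g (ki i).castSucc)
      * (volume (D i ∩ Ico (g (ki i).castSucc) (g (ki i).succ))).toReal := by
    rw [hDvol i (ki i)]
    have : γ (ki i) i = (g (ki i).succ - g (ki i).castSucc) / N := by simp [hγdef]
    rw [this, ENNReal.toReal_ofReal (div_nonneg (le_of_lt (hlen (ki i))) hNR.le)]
    exact mul_pos (hki i) (div_pos (hlen (ki i)) hNR)
  refine lt_of_lt_of_le hterm_pos ?_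
  refine Finset.single_le_sum (f := fun k : Fin K => F i (g k.castSucc)
    * (volume (D i ∩ Ico (g k.castSucc) (g k.succ))).toReal)
    (fun k _ => ?_) (Finset.mem_univ (ki i))
  exact mul_nonneg (hnn i _) ENNReal.toReal_nonneg

lemma mnw_pos {N : ℕ} (hN : 0 < N) (F : Fin N → ℝ → ℝ) (hF : ∀ i, ValidDensity (F i))
    {B : Fin N → Set ℝ} (hB : IsMNW F B) : ∀ i, 0 < cakeval (F i) (B i) := by
  obtain ⟨K, g, hsm, hg0, hgl, hconst⟩ := exists_grid F fun i => (hF i).1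
  obtain ⟨D, hDalloc, hDpos⟩ := pos_alloc hN g hsm hg0 hgl F (fun i => (hF i).2.1)
    hconst (fun i => (hF i).2.2)
  have hD : (0:ℝ) < nashProd F D := Finset.prod_pos fun i _ => hDpos i
  have hle : nashProd F D ≤ nashProd F B := hB.2 D hDalloc
  have hprod : (0:ℝ) < ∏ i, cakeval (F i) (B i) := lt_of_lt_of_le hD hle
  intro i
  rcases lt_or_eq_of_le (cakeval_nonneg (fun x => (hF i).2.1 x)
      (hB.1.2.1 i).measurableSet) with h | h
  · exact h
  · exfalso
    rw [Finset.prod_eq_zero (Finset.mem_univ i) h.symm] at hprod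
    exact lt_irrefl 0 hprod

/-- Core inequality of Theorem 5.1 (interpolation for cake cutting): if `A` is MNW
for the true profile and `A'` is MNW for the profile where agent 1 (index `0`)
misreports `f1'`, then for every `c ∈ [0,1]`,
`v_1(A_1') · (∏_{j≥2} v_j(A_j'))^c ≤ 2^{1−c} · v_1(A_1) · (∏_{j≥2} v_j(A_j))^c`. -/
theorem interpolation_core_inequality (n : ℕ) (f : Fin (n + 1) → ℝ → ℝ) (f1' : ℝ → ℝ)
    (hf : ∀ i, ValidDensity (f i)) (hf1' : ValidDensity f1')
    (c : ℝ) (hc : c ∈ Set.Icc (0 : ℝ) 1)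
    (A A' : Fin (n + 1) → Set ℝ)
    (hA : IsMNW f A) (hA' : IsMNW (Function.update f 0 f1') A') :
    cakeval (f 0) (A' 0) * (∏ j ∈ Finset.univ.erase 0, cakeval (f j) (A' j)) ^ c ≤
      (2 : ℝ) ^ (1 - c) *
        (cakeval (f 0) (A 0) * (∏ j ∈ Finset.univ.erase 0, cakeval (f j) (A j)) ^ c) := by
  classical
  obtain ⟨hc0, hc1⟩ := hc
  set fu := Function.update f 0 f1' with hfu
  have hfuval : ∀ i, ValidDensity (fu i) := by
    intro i
    by_cases h : i = 0
    · subst h; rw [hfu, Function.update_self]; exact hf1'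
    · rw [hfu, Function.update_of_ne h]; exact hf i
  -- grid for all densities
  set F2 : Fin (n+2) → ℝ → ℝ := Fin.snoc f f1' with hF2
  have hF2pc : ∀ i, PiecewiseConstant (F2 i) := by
    intro i
    refine Fin.lastCases ?_ ?_ i
    · rw [hF2]; simp only [Fin.snoc_last]; exact hf1'.1
    · intro j; rw [hF2]; simp only [Fin.snoc_castSucc]; exact (hf j).1
  obtain ⟨K, g, hsm, hg0, hgl, hconst2⟩ := exists_grid F2 hF2pc
  have hconstf : ∀ i : Fin (n+1), ∀ k : Fin K, ∀ x ∈ Ico (g k.castSucc) (g k.succ),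
      f i x = f i (g k.castSucc) := by
    intro i k x hx
    have := hconst2 i.castSucc k x hx
    rwa [hF2, Fin.snoc_castSucc] at this
  have hconstu : ∀ i : Fin (n+1), ∀ k : Fin K, ∀ x ∈ Ico (g k.castSucc) (g k.succ),
      fu i x = fu i (g k.castSucc) := by
    intro i k x hx
    by_cases h : i = 0
    · subst h
      rw [hfu, Function.update_self]
      have := hconst2 (Fin.last (n+1)) k x hx
      rwa [hF2, Fin.snoc_last] at this
    · rw [hfu, Function.update_of_ne h]
      exact hconstf i k x hx
  -- positivity
  have hNpos : 0 < n + 1 := Nat.succ_pos n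
  have hVpos : ∀ i, 0 < cakeval (f i) (A i) := mnw_pos hNpos f hf hA
  have hWpos : ∀ i, 0 < cakeval (fu i) (A' i) := mnw_pos hNpos fu hfuval hA'
  have hWpos' : ∀ i : Fin (n+1), i ≠ 0 → 0 < cakeval (f i) (A' i) := by
    intro i hi
    have := hWpos i
    rwa [hfu, Function.update_of_ne hi] at this
  have hb'nn : ∀ i, 0 ≤ cakeval (f i) (A' i) :=
    fun i => cakeval_nonneg (fun x => (hf i).2.1 x) (hA'.1.2.1 i).measurableSet
  -- inequality (I)
  have hI : ∑ i, cakeval (f i) (A' i) / cakeval (f i) (A i) ≤ (n+1 : ℕ) := by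
    apply sum_div_le_card _ _ hVpos
    intro θ hθ
    obtain ⟨C, hCalloc, hCval⟩ := interp_alloc g hsm hg0 hgl A A' hA.1 hA'.1 θ hθ
    have hle := hA.2 C hCalloc
    calc ∏ i, ((1-θ) * cakeval (f i) (A i) + θ * cakeval (f i) (A' i))
        = nashProd f C :=
          (Finset.prod_congr rfl fun i _ =>
            (hCval (f i) (fun x => (hf i).2.1 x) (hconstf i) i).symm)
      _ ≤ nashProd f A := hle
      _ = ∏ i, cakeval (f i) (A i) := rfl
  -- inequality (II)
  have hII : ∑ i, cakeval (fu i) (A i) / cakeval (fu i) (A' i) ≤ (n+1 : ℕ) := by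
    apply sum_div_le_card _ _ hWpos
    intro θ hθ
    obtain ⟨C, hCalloc, hCval⟩ := interp_alloc g hsm hg0 hgl A' A hA'.1 hA.1 θ hθ
    have hle := hA'.2 C hCalloc
    calc ∏ i, ((1-θ) * cakeval (fu i) (A' i) + θ * cakeval (fu i) (A i))
        = nashProd fu C :=
          (Finset.prod_congr rfl fun i _ =>
            (hCval (fu i) (fun x => (hfuval i).2.1 x) (hconstu i) i).symm)
      _ ≤ nashProd fu A' := hle
      _ = ∏ i, cakeval (fu i) (A' i) := rfl
  -- split sums at 0
  set u := cakeval (f 0) (A' 0) with hu_def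
  set v := cakeval (f 0) (A 0) with hv_def
  have hvpos : 0 < v := hVpos 0
  have hIsplit : u / v + ∑ i ∈ Finset.univ.erase 0, cakeval (f i) (A' i) / cakeval (f i) (A i)
      ≤ (n+1 : ℕ) := by
    rw [Finset.add_sum_erase (f := fun i : Fin (n+1) => cakeval (f i) (A' i) / cakeval (f i) (A i))
      Finset.univ (Finset.mem_univ 0)]
    exact hI
  have hIIsplit : ∑ i ∈ Finset.univ.erase 0, cakeval (f i) (A i) / cakeval (f i) (A' i)
      ≤ (n+1 : ℕ) := by
    have h0 : 0 ≤ cakeval (fu 0) (A 0) / cakeval (fu 0) (A' 0) := by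
      refine div_nonneg ?_ (le_of_lt (hWpos 0))
      exact cakeval_nonneg (fun x => (hfuval 0).2.1 x) (hA.1.2.1 0).measurableSet
    have heq : ∀ i ∈ Finset.univ.erase 0,
        cakeval (fu i) (A i) / cakeval (fu i) (A' i)
          = cakeval (f i) (A i) / cakeval (f i) (A' i) := by
      intro i hi
      rw [hfu, Function.update_of_ne (Finset.ne_of_mem_erase hi)]
    calc ∑ i ∈ Finset.univ.erase 0, cakeval (f i) (A i) / cakeval (f i) (A' i)
        = ∑ i ∈ Finset.univ.erase 0, cakeval (fu i) (A i) / cakeval (fu i) (A' i) :=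
          (Finset.sum_congr rfl heq).symm
      _ ≤ cakeval (fu 0) (A 0) / cakeval (fu 0) (A' 0)
          + ∑ i ∈ Finset.univ.erase 0, cakeval (fu i) (A i) / cakeval (fu i) (A' i) := by
          linarith
      _ = ∑ i, cakeval (fu i) (A i) / cakeval (fu i) (A' i) :=
          Finset.add_sum_erase (f := fun i : Fin (n+1) => cakeval (fu i) (A i) / cakeval (fu i) (A' i))
            Finset.univ (Finset.mem_univ 0)
      _ ≤ (n+1 : ℕ) := hII
  -- AM-GM per term
  have hAMGM : ∀ i ∈ Finset.univ.erase 0,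
      2 - cakeval (f i) (A i) / cakeval (f i) (A' i)
        ≤ cakeval (f i) (A' i) / cakeval (f i) (A i) := by
    intro i hi
    have h1 := hVpos i
    have h2 := hWpos' i (Finset.ne_of_mem_erase hi)
    have key : 2 ≤ cakeval (f i) (A' i) / cakeval (f i) (A i)
        + cakeval (f i) (A i) / cakeval (f i) (A' i) := by
      rw [div_add_div _ _ (ne_of_gt h1) (ne_of_gt h2), le_div_iff₀ (by positivity)]
      nlinarith [sq_nonneg (cakeval (f i) (A i) - cakeval (f i) (A' i))]
    linarith
  have hcard : (Finset.univ.erase (0 : Fin (n+1))).card = n := by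
    rw [Finset.card_erase_of_mem (Finset.mem_univ 0), Finset.card_univ, Fintype.card_fin]
    omega
  have hlow : (n:ℝ) - 1 ≤ ∑ i ∈ Finset.univ.erase 0, cakeval (f i) (A' i) / cakeval (f i) (A i) := by
    have hs := Finset.sum_le_sum hAMGM
    rw [Finset.sum_sub_distrib, Finset.sum_const, hcard, nsmul_eq_mul, mul_comm] at hs
    have : (n:ℝ) * 2 - (n+1 : ℕ) ≤ (n:ℝ) * 2
        - ∑ i ∈ Finset.univ.erase 0, cakeval (f i) (A i) / cakeval (f i) (A' i) := by
      linarith [hIIsplit]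
    push_cast at this ⊢
    linarith [hs]
  -- u ≤ 2v
  have hu2v : u ≤ 2 * v := by
    have : u / v ≤ 2 := by
      push_cast at hIsplit
      linarith [hlow]
    calc u = (u / v) * v := by field_simp
      _ ≤ 2 * v := mul_le_mul_of_nonneg_right this (le_of_lt hvpos)
  -- L1
  set P := ∏ j ∈ Finset.univ.erase 0, cakeval (f j) (A j) with hP_def
  set P' := ∏ j ∈ Finset.univ.erase 0, cakeval (f j) (A' j) with hP'_def
  have hL1 : u * P' ≤ v * P := by
    have := hA.2 A' hA'.1
    unfold nashProd at this
    rwa [← Finset.mul_prod_erase _ _ (Finset.mem_univ 0),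
      ← Finset.mul_prod_erase _ _ (Finset.mem_univ 0)] at this
  have hPpos : 0 < P := Finset.prod_pos fun i hi => hVpos i
  have hP'pos : 0 < P' := Finset.prod_pos fun i hi => hWpos' i (Finset.ne_of_mem_erase hi)
  have hunn : 0 ≤ u := hb'nn 0
  -- final rpow computation
  rcases eq_or_lt_of_le hunn with hu0 | hu0
  · rw [← hu0, zero_mul]
    have h1 : (0:ℝ) < (2:ℝ) ^ (1-c) := Real.rpow_pos_of_pos (by norm_num) _
    have h2 : (0:ℝ) < P ^ c := Real.rpow_pos_of_pos hPpos _
    exact le_of_lt (mul_pos h1 (mul_pos hvpos h2))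
  · have key : u * P' ^ c = u ^ (1-c) * (u * P') ^ c := by
      rw [Real.mul_rpow (le_of_lt hu0) (le_of_lt hP'pos), ← mul_assoc,
        ← Real.rpow_add hu0]
      norm_num
    have h2 : (u * P') ^ c ≤ (v * P) ^ c :=
      Real.rpow_le_rpow (mul_nonneg hunn (le_of_lt hP'pos)) hL1 hc0
    have h3 : u ^ (1-c) ≤ (2*v) ^ (1-c) :=
      Real.rpow_le_rpow (le_of_lt hu0) hu2v (by linarith)
    have h4 : (2*v) ^ (1-c) * (v*P) ^ c = (2:ℝ)^(1-c) * (v * P ^ c) := by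
      rw [Real.mul_rpow (by norm_num) (le_of_lt hvpos),
        Real.mul_rpow (le_of_lt hvpos) (le_of_lt hPpos), mul_assoc,
        ← mul_assoc (v ^ (1-c)), ← Real.rpow_add hvpos]
      norm_num
    calc u * P' ^ c = u ^ (1-c) * (u * P') ^ c := key
      _ ≤ (2*v) ^ (1-c) * (v*P) ^ c := by
          refine mul_le_mul h3 h2 ?_ ?_
          · exact Real.rpow_nonneg (mul_nonneg hunn (le_of_lt hP'pos)) c
          · exact Real.rpow_nonneg (by linarith) (1-c)
      _ = (2:ℝ)^(1-c) * (v * P ^ c) := h4
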